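/- Let (Γ, ψ) be an H-asymptotic couple with Γ divisible and with asymptotic integration, let Γ_0 be a divisible subgroup of Γ such that ψ(Γ_0 ∖ {0}) ⊆ Γ_0 and s(Γ_0) ⊆ Γ_0, and let c_1, …, c_m ∈ Γ ∖ Γ_0. Set Γ_1 := Γ_0 + ℚc_1 + ⋯ + ℚc_m. Then the set s(Γ_1) ∖ s(Γ_0) has at most m + 1 elements. -/

import Mathlib

section AuxACouple

variable {Γ : Type*} [AddCommGroup Γ] [LinearOrder Γ] [IsOrderedAddMonoid Γ] [Module ℚ Γ]

private lemma rat_smul_key (q : ℚ) (x : Γ) :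
    (q.den : ℤ) • (q • x) = q.num • x := by
  rw [← Int.cast_smul_eq_zsmul ℚ, ← Int.cast_smul_eq_zsmul ℚ, smul_smul]
  push_cast
  rw [mul_comm, Rat.mul_den_eq_num]

private lemma rat_smul_ne_zero {q : ℚ} {x : Γ} (hq : q ≠ 0) (hx : x ≠ 0) : q • x ≠ 0 := by
  intro h
  apply hx
  have := congrArg (fun y => q⁻¹ • y) h
  simpa [smul_smul, inv_mul_cancel₀ hq] using this

variable (ψ : Γ → Γ)

private lemma psi_neg (hAC2 : ∀ α : Γ, α ≠ 0 → ∀ k : ℤ, k ≠ 0 → ψ (k • α) = ψ α)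
    (x : Γ) (hx : x ≠ 0) : ψ (-x) = ψ x := by
  have := hAC2 x hx (-1) (by norm_num)
  rwa [neg_one_zsmul] at this

private lemma psi_abs (hAC2 : ∀ α : Γ, α ≠ 0 → ∀ k : ℤ, k ≠ 0 → ψ (k • α) = ψ α)
    (x : Γ) (hx : x ≠ 0) : ψ |x| = ψ x := by
  rcases abs_cases x with ⟨h, _⟩ | ⟨h, _⟩
  · rw [h]
  · rw [h]; exact psi_neg ψ hAC2 x hx

private lemma psi_rat (hAC2 : ∀ α : Γ, α ≠ 0 → ∀ k : ℤ, k ≠ 0 → ψ (k • α) = ψ α)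
    (q : ℚ) (hq : q ≠ 0) (x : Γ) (hx : x ≠ 0) : ψ (q • x) = ψ x := by
  have hden : ((q.den : ℤ)) ≠ 0 := by exact_mod_cast q.den_nz
  have h1 : ψ (q • x) = ψ ((q.den : ℤ) • (q • x)) :=
    (hAC2 _ (rat_smul_ne_zero hq hx) _ hden).symm
  rw [h1, rat_smul_key, hAC2 x hx q.num (Rat.num_ne_zero.mpr hq)]

private lemma hc' (hAC2 : ∀ α : Γ, α ≠ 0 → ∀ k : ℤ, k ≠ 0 → ψ (k • α) = ψ α)
    (hHC : ∀ α β : Γ, 0 < α → α ≤ β → ψ β ≤ ψ α)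
    (x y : Γ) (hx : x ≠ 0) (h : |x| ≤ |y|) : ψ y ≤ ψ x := by
  have hy : y ≠ 0 := by
    intro h0
    rw [h0, abs_zero] at h
    exact hx (abs_eq_zero.mp (le_antisymm h (abs_nonneg x)))
  rw [← psi_abs ψ hAC2 x hx, ← psi_abs ψ hAC2 y hy]
  exact hHC |x| |y| (abs_pos.mpr hx) h

private lemma minrule (hAC1 : ∀ α β : Γ, α ≠ 0 → β ≠ 0 → α + β ≠ 0 → min (ψ α) (ψ β) ≤ ψ (α + β))
    (hAC2 : ∀ α : Γ, α ≠ 0 → ∀ k : ℤ, k ≠ 0 → ψ (k • α) = ψ α)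
    (x y : Γ) (hx : x ≠ 0) (hy : y ≠ 0) (h : ψ x < ψ y) :
    x - y ≠ 0 ∧ ψ (x - y) = ψ x := by
  have hsub : x - y ≠ 0 := by
    intro h0
    rw [sub_eq_zero.mp h0] at h
    exact lt_irrefl _ h
  refine ⟨hsub, le_antisymm ?_ ?_⟩
  · have h2 := hAC1 (x - y) y hsub hy (by rw [sub_add_cancel]; exact hx)
    rw [sub_add_cancel] at h2
    rcases min_cases (ψ (x - y)) (ψ y) with ⟨he, _⟩ | ⟨he, hle⟩
    · rwa [he] at h2
    · rw [he] at h2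
      exact absurd h2 (not_le.mpr h)
  · have h1 := hAC1 x (-y) hx (neg_ne_zero.mpr hy)
      (by rw [← sub_eq_add_neg]; exact hsub)
    rw [psi_neg ψ hAC2 y hy, ← sub_eq_add_neg, min_eq_left h.le] at h1
    exact h1

private lemma perturb (hAC2 : ∀ α : Γ, α ≠ 0 → ∀ k : ℤ, k ≠ 0 → ψ (k • α) = ψ α)
    (hHC : ∀ α β : Γ, 0 < α → α ≤ β → ψ β ≤ ψ α)
    (x e : Γ) (hx : x ≠ 0) (h : |e| + |e| < |x|) :
    x + e ≠ 0 ∧ ψ (x + e) = ψ x := by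
  have h0 : |x| ≤ |x + e| + |e| := by
    calc |x| = |(x + e) + -e| := by rw [add_neg_cancel_right]
      _ ≤ |x + e| + |-e| := abs_add_le _ _
      _ = |x + e| + |e| := by rw [abs_neg]
  have he_lt : |e| < |x + e| :=
    (add_lt_add_iff_right |e|).mp (lt_of_lt_of_le h h0)
  have hne : x + e ≠ 0 := by
    intro h0'
    rw [h0', abs_zero] at he_lt
    exact absurd he_lt (not_lt.mpr (abs_nonneg e))
  have he_le : |e| ≤ |x| :=
    le_of_lt (lt_of_le_of_lt (le_add_of_nonneg_left (abs_nonneg e)) h)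
  have hxx : |x + x| = |x| + |x| := by rw [← two_nsmul, abs_nsmul, two_nsmul]
  have hxexe : |(x + e) + (x + e)| = |x + e| + |x + e| := by
    rw [← two_nsmul, abs_nsmul, two_nsmul]
  have hpsixx : ψ (x + x) = ψ x := by
    have h2 : (2 : ℤ) • x = x + x := two_zsmul x
    rw [← h2]; exact hAC2 x hx 2 two_ne_zero
  have hpsixexe : ψ ((x + e) + (x + e)) = ψ (x + e) := by
    have h2 : (2 : ℤ) • (x + e) = (x + e) + (x + e) := two_zsmul (x + e)
    rw [← h2]; exact hAC2 (x + e) hne 2 two_ne_zero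
  refine ⟨hne, le_antisymm ?_ ?_⟩
  · -- ψ (x+e) ≤ ψ x : use |x| ≤ |(x+e)+(x+e)|
    have hle : |x| ≤ |(x + e) + (x + e)| := by
      rw [hxexe]
      calc |x| ≤ |x + e| + |e| := h0
        _ ≤ |x + e| + |x + e| := add_le_add_right he_lt.le _
    have := hc' ψ hAC2 hHC x ((x + e) + (x + e)) hx hle
    rwa [hpsixexe] at this
  · -- ψ x ≤ ψ (x+e) : use |x+e| ≤ |x+x|
    have hle : |x + e| ≤ |x + x| := by
      rw [hxx]
      calc |x + e| ≤ |x| + |e| := abs_add_le _ _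
        _ ≤ |x| + |x| := add_le_add_right he_le _
    have := hc' ψ hAC2 hHC (x + e) (x + x) hne hle
    rwa [hpsixx] at this

private lemma mono (hAC1 : ∀ α β : Γ, α ≠ 0 → β ≠ 0 → α + β ≠ 0 → min (ψ α) (ψ β) ≤ ψ (α + β))
    (hAC2 : ∀ α : Γ, α ≠ 0 → ∀ k : ℤ, k ≠ 0 → ψ (k • α) = ψ α)
    (hAC3 : ∀ α β : Γ, 0 < α → β ≠ 0 → ψ β < α + ψ α)
    (x y : Γ) (hx : x ≠ 0) (hy : y ≠ 0) (h : x < y) : x + ψ x < y + ψ y := by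
  have hδpos : 0 < y - x := sub_pos.mpr h
  rcases lt_trichotomy (ψ x) (ψ y) with hlt | heq | hgt
  · exact add_lt_add h hlt
  · rw [heq]; exact add_lt_add_left h _
  · have hm := minrule ψ hAC1 hAC2 y x hy hx hgt
    have h3 := hAC3 (y - x) x hδpos hx
    rw [hm.2] at h3
    have h4 : x + ψ x < x + ((y - x) + ψ y) := add_lt_add_right h3 x
    have he : x + ((y - x) + ψ y) = y + ψ y := by abel
    rwa [he] at h4

private lemma claimA (hAC1 : ∀ α β : Γ, α ≠ 0 → β ≠ 0 → α + β ≠ 0 → min (ψ α) (ψ β) ≤ ψ (α + β))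
    (hAC2 : ∀ α : Γ, α ≠ 0 → ∀ k : ℤ, k ≠ 0 → ψ (k • α) = ψ α)
    (hAC3 : ∀ α β : Γ, 0 < α → β ≠ 0 → ψ β < α + ψ α)
    (hHC : ∀ α β : Γ, 0 < α → α ≤ β → ψ β ≤ ψ α)
    (I : Γ → Γ) (hI : ∀ α : Γ, I α ≠ 0 ∧ I α + ψ (I α) = α)
    (α α' : Γ) (h : ψ (I α) < ψ (I α')) :
    α - α' ≠ 0 ∧ ψ (α - α') = ψ (I α) := by
  obtain ⟨hβ, e1⟩ := hI α
  obtain ⟨hβ', e2⟩ := hI α'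
  have hmin := minrule ψ hAC1 hAC2 (I α) (I α') hβ hβ' h
  set δ := I α - I α' with hδ
  have habs : |δ| ≠ 0 := abs_ne_zero.mpr hmin.1
  have hpos : 0 < |δ| := abs_pos.mpr hmin.1
  set h₀ := (1/2 : ℚ) • |δ| with hh
  have hsum : h₀ + h₀ = |δ| := by rw [hh, ← add_smul]; norm_num
  have h₀pos : 0 < h₀ := by
    by_contra hle
    push_neg at hle
    exact absurd (hsum ▸ add_nonpos hle hle) (not_le.mpr hpos)
  have hψh₀ : ψ h₀ = ψ (I α) := by
    rw [hh, psi_rat ψ hAC2 (1/2) (by norm_num) |δ| habs, psi_abs ψ hAC2 δ hmin.1, hmin.2]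
  have h3 := hAC3 h₀ (I α') h₀pos hβ'
  rw [hψh₀] at h3
  set ε := ψ (I α) - ψ (I α') with he
  have hεabs : |ε| = ψ (I α') - ψ (I α) := by
    rw [he, abs_sub_comm, abs_of_pos (sub_pos.mpr h)]
  have h5 : ψ (I α') - ψ (I α) < h₀ := sub_lt_iff_lt_add.mpr h3
  have h4 : |ε| + |ε| < |δ| := by
    rw [hεabs]
    exact (add_lt_add h5 h5).trans_eq hsum
  have hp := perturb ψ hAC2 hHC δ ε hmin.1 h4
  have hsub : α - α' = δ + ε := by
    rw [← e1, ← e2, hδ, he]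
    abel
  exact ⟨by rw [hsub]; exact hp.1, by rw [hsub, hp.2, hmin.2]⟩

private lemma step (hAC1 : ∀ α β : Γ, α ≠ 0 → β ≠ 0 → α + β ≠ 0 → min (ψ α) (ψ β) ≤ ψ (α + β))
    (hAC2 : ∀ α : Γ, α ≠ 0 → ∀ k : ℤ, k ≠ 0 → ψ (k • α) = ψ α)
    (Δ : Submodule ℚ Γ) (c : Γ) :
    ∃ t : Γ, ∀ x ∈ Δ ⊔ Submodule.span ℚ {c}, x ≠ 0 →
      ψ x ∈ ψ '' {y : Γ | y ∈ Δ ∧ y ≠ 0} ∪ {t} := by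
  by_cases hex : ∃ x₀, x₀ ∈ Δ ⊔ Submodule.span ℚ {c} ∧ x₀ ≠ 0 ∧
      ψ x₀ ∉ ψ '' {y : Γ | y ∈ Δ ∧ y ≠ 0}
  · obtain ⟨x₀, hx₀mem, hx₀ne, hx₀nim⟩ := hex
    refine ⟨ψ x₀, fun x hx hxne => ?_⟩
    by_cases him : ψ x ∈ ψ '' {y : Γ | y ∈ Δ ∧ y ≠ 0}
    · exact Or.inl him
    right
    rw [Set.mem_singleton_iff]
    -- decompose x
    obtain ⟨γ, hγ, z, hz, hxeq⟩ := Submodule.mem_sup.mp hx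
    obtain ⟨q, hq⟩ := Submodule.mem_span_singleton.mp hz
    obtain ⟨γ₀, hγ₀, z₀, hz₀, hx₀eq⟩ := Submodule.mem_sup.mp hx₀mem
    obtain ⟨q₀, hq₀⟩ := Submodule.mem_span_singleton.mp hz₀
    have hqne : q ≠ 0 := by
      rintro rfl
      rw [zero_smul] at hq
      rw [← hq, add_zero] at hxeq
      exact him ⟨x, ⟨hxeq ▸ hγ, hxne⟩, rfl⟩
    have hq₀ne : q₀ ≠ 0 := by
      rintro rfl
      rw [zero_smul] at hq₀
      rw [← hq₀, add_zero] at hx₀eq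
      exact hx₀nim ⟨x₀, ⟨hx₀eq ▸ hγ₀, hx₀ne⟩, rfl⟩
    have hveq : q⁻¹ • x = q⁻¹ • γ + c := by
      rw [← hxeq, ← hq, smul_add, smul_smul, inv_mul_cancel₀ hqne, one_smul]
    have hv₀eq : q₀⁻¹ • x₀ = q₀⁻¹ • γ₀ + c := by
      rw [← hx₀eq, ← hq₀, smul_add, smul_smul, inv_mul_cancel₀ hq₀ne, one_smul]
    have hvne : q⁻¹ • x ≠ 0 := rat_smul_ne_zero (inv_ne_zero hqne) hxne
    have hv₀ne : q₀⁻¹ • x₀ ≠ 0 := rat_smul_ne_zero (inv_ne_zero hq₀ne) hx₀ne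
    have hψv : ψ (q⁻¹ • x) = ψ x := psi_rat ψ hAC2 q⁻¹ (inv_ne_zero hqne) x hxne
    have hψv₀ : ψ (q₀⁻¹ • x₀) = ψ x₀ := psi_rat ψ hAC2 q₀⁻¹ (inv_ne_zero hq₀ne) x₀ hx₀ne
    have hdiffmem : q⁻¹ • x - q₀⁻¹ • x₀ ∈ Δ := by
      rw [hveq, hv₀eq]
      have : (q⁻¹ • γ + c) - (q₀⁻¹ • γ₀ + c) = q⁻¹ • γ - q₀⁻¹ • γ₀ := by abel
      rw [this]
      exact sub_mem (Submodule.smul_mem _ _ hγ) (Submodule.smul_mem _ _ hγ₀)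
    have hdiffmem' : q₀⁻¹ • x₀ - q⁻¹ • x ∈ Δ := by
      have : q₀⁻¹ • x₀ - q⁻¹ • x = -(q⁻¹ • x - q₀⁻¹ • x₀) := by abel
      rw [this]
      exact neg_mem hdiffmem
    rcases lt_trichotomy (ψ (q⁻¹ • x)) (ψ (q₀⁻¹ • x₀)) with hlt | heq | hgt
    · exfalso
      have hm := minrule ψ hAC1 hAC2 (q⁻¹ • x) (q₀⁻¹ • x₀) hvne hv₀ne hlt
      exact him ⟨q⁻¹ • x - q₀⁻¹ • x₀, ⟨hdiffmem, hm.1⟩, by rw [hm.2, hψv]⟩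
    · rw [← hψv, heq, hψv₀]
    · exfalso
      have hm := minrule ψ hAC1 hAC2 (q₀⁻¹ • x₀) (q⁻¹ • x) hv₀ne hvne hgt
      exact hx₀nim ⟨q₀⁻¹ • x₀ - q⁻¹ • x, ⟨hdiffmem', hm.1⟩, by rw [hm.2, hψv₀]⟩
  · push_neg at hex
    exact ⟨0, fun x hx hxne => Or.inl (hex x hx hxne)⟩

private lemma listcount
    (hAC1 : ∀ α β : Γ, α ≠ 0 → β ≠ 0 → α + β ≠ 0 → min (ψ α) (ψ β) ≤ ψ (α + β))
    (hAC2 : ∀ α : Γ, α ≠ 0 → ∀ k : ℤ, k ≠ 0 → ψ (k • α) = ψ α)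
    (Δ : Submodule ℚ Γ) (l : List Γ) :
    ∃ F : Finset Γ, F.card ≤ l.length ∧ ∀ x ∈ Δ ⊔ Submodule.span ℚ {y : Γ | y ∈ l},
      x ≠ 0 → ψ x ∈ ψ '' {y : Γ | y ∈ Δ ∧ y ≠ 0} ∪ ↑F := by
  induction l with
  | nil =>
    refine ⟨∅, by simp, fun x hx hxne => ?_⟩
    have hempty : {y : Γ | y ∈ ([] : List Γ)} = (∅ : Set Γ) := by ext y; simp
    rw [hempty, Submodule.span_empty, sup_bot_eq] at hx
    exact Or.inl ⟨x, ⟨hx, hxne⟩, rfl⟩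
  | cons a l ih =>
    obtain ⟨F, hFcard, hF⟩ := ih
    obtain ⟨t, ht⟩ := step ψ hAC1 hAC2 (Δ ⊔ Submodule.span ℚ {y : Γ | y ∈ l}) a
    refine ⟨insert t F, ?_, ?_⟩
    · calc (insert t F).card ≤ F.card + 1 := Finset.card_insert_le _ _
        _ ≤ l.length + 1 := by omega
        _ = (a :: l).length := by simp
    · intro x hx hxne
      have hset : {y : Γ | y ∈ (a :: l)} = insert a {y : Γ | y ∈ l} := by
        ext y; simp [List.mem_cons]
      have hsup : Δ ⊔ Submodule.span ℚ {y : Γ | y ∈ (a :: l)} =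
          (Δ ⊔ Submodule.span ℚ {y : Γ | y ∈ l}) ⊔ Submodule.span ℚ {a} := by
        rw [hset, Submodule.span_insert, sup_comm (Submodule.span ℚ {a}) _, ← sup_assoc]
      rw [hsup] at hx
      rcases ht x hx hxne with ⟨y, ⟨hyΔ', hyne⟩, hyeq⟩ | ht0
      · rcases hF y hyΔ' hyne with him | hFmem
        · exact Or.inl (hyeq ▸ him)
        · right
          rw [Finset.coe_insert]
          exact Set.mem_insert_of_mem _ (hyeq ▸ hFmem)
      · right
        rw [Set.mem_singleton_iff] at ht0
        rw [Finset.coe_insert, ht0]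
        exact Set.mem_insert _ _

private lemma mem_s_image
    (hAC1 : ∀ α β : Γ, α ≠ 0 → β ≠ 0 → α + β ≠ 0 → min (ψ α) (ψ β) ≤ ψ (α + β))
    (hAC2 : ∀ α : Γ, α ≠ 0 → ∀ k : ℤ, k ≠ 0 → ψ (k • α) = ψ α)
    (hAC3 : ∀ α β : Γ, 0 < α → β ≠ 0 → ψ β < α + ψ α)
    (I : Γ → Γ) (hI : ∀ α : Γ, I α ≠ 0 ∧ I α + ψ (I α) = α)
    (Γ0 : Submodule ℚ Γ) (hψΓ0 : ∀ γ ∈ Γ0, γ ≠ 0 → ψ γ ∈ Γ0)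
    (γ : Γ) (hγ0 : γ ∈ Γ0) (hγ : γ ≠ 0) :
    ψ γ ∈ (fun α => ψ (I α)) '' (Γ0 : Set Γ) := by
  have hψγ : ψ γ ∈ Γ0 := hψΓ0 γ hγ0 hγ
  refine ⟨γ + ψ γ, add_mem hγ0 hψγ, ?_⟩
  obtain ⟨hne, heq⟩ := hI (γ + ψ γ)
  have hIγ : I (γ + ψ γ) = γ := by
    by_contra hne2
    rcases lt_or_gt_of_ne hne2 with hlt | hgt
    · exact absurd heq (ne_of_lt (mono ψ hAC1 hAC2 hAC3 _ _ hne hγ hlt))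
    · exact absurd heq.symm (ne_of_lt (mono ψ hAC1 hAC2 hAC3 _ _ hγ hne hgt))
  simp only [hIγ]

end AuxACouple

/-- Let (Γ, ψ) be an H-asymptotic couple with Γ divisible and with asymptotic
integration (∫ being the integration map, s(α) := ψ(∫α)), Γ_0 a divisible
subgroup closed under ψ (on nonzero elements) and under s, and
c_1, …, c_m ∈ Γ ∖ Γ_0.  Then s(Γ_0 + ℚc_1 + ⋯ + ℚc_m) ∖ s(Γ_0) has at most
m + 1 elements. -/
theorem finite_s_extension
    {Γ : Type*} [AddCommGroup Γ] [LinearOrder Γ] [IsOrderedAddMonoid Γ] [Module ℚ Γ]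
    (ψ : Γ → Γ)
    (hAC1 : ∀ α β : Γ, α ≠ 0 → β ≠ 0 → α + β ≠ 0 → min (ψ α) (ψ β) ≤ ψ (α + β))
    (hAC2 : ∀ α : Γ, α ≠ 0 → ∀ k : ℤ, k ≠ 0 → ψ (k • α) = ψ α)
    (hAC3 : ∀ α β : Γ, 0 < α → β ≠ 0 → ψ β < α + ψ α)
    (hHC : ∀ α β : Γ, 0 < α → α ≤ β → ψ β ≤ ψ α)
    (I : Γ → Γ) (hI : ∀ α : Γ, I α ≠ 0 ∧ I α + ψ (I α) = α)
    (Γ0 : Submodule ℚ Γ)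
    (hψΓ0 : ∀ γ ∈ Γ0, γ ≠ 0 → ψ γ ∈ Γ0)
    (hsΓ0 : ∀ γ ∈ Γ0, ψ (I γ) ∈ Γ0)
    (m : ℕ) (c : Fin m → Γ) (hc : ∀ i, c i ∉ Γ0) :
    ((fun α => ψ (I α)) '' {x | ∃ γ ∈ Γ0, ∃ q : Fin m → ℚ, x = γ + ∑ i, q i • c i} \
        (fun α => ψ (I α)) '' (Γ0 : Set Γ)).Finite ∧
    ((fun α => ψ (I α)) '' {x | ∃ γ ∈ Γ0, ∃ q : Fin m → ℚ, x = γ + ∑ i, q i • c i} \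
        (fun α => ψ (I α)) '' (Γ0 : Set Γ)).ncard ≤ m + 1 := by
  classical
  set s : Γ → Γ := fun α => ψ (I α) with hs
  set A : Set Γ := {x | ∃ γ ∈ Γ0, ∃ q : Fin m → ℚ, x = γ + ∑ i, q i • c i} with hA
  have hAM : ∀ x ∈ A, x ∈ Γ0 ⊔ Submodule.span ℚ {y : Γ | y ∈ List.ofFn c} := by
    rintro x ⟨γ, hγ, q, rfl⟩
    refine add_mem (Submodule.mem_sup_left hγ) (Submodule.sum_mem _ fun i _ => ?_)
    refine Submodule.smul_mem _ _ (Submodule.mem_sup_right (Submodule.subset_span ?_))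
    simp [List.mem_ofFn]
  obtain ⟨F, hFcard, hF⟩ := listcount ψ hAC1 hAC2 Γ0 (List.ofFn c)
  have hFlen : F.card ≤ m := by simpa using hFcard
  obtain ⟨u₀, hu₀⟩ : ∃ u₀ : Γ, ∀ x ∈ s '' A \ s '' (Γ0 : Set Γ),
      (∀ α ∈ A, s α ≤ x) → x = u₀ := by
    by_cases hmax : ∃ u, u ∈ s '' A \ s '' (Γ0 : Set Γ) ∧ ∀ α ∈ A, s α ≤ u
    · obtain ⟨u, huS, humax⟩ := hmax
      refine ⟨u, fun x hxS hxmax => ?_⟩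
      obtain ⟨⟨αx, hαx, hxeq⟩, _⟩ := hxS
      obtain ⟨⟨αu, hαu, hueq⟩, _⟩ := huS
      refine le_antisymm ?_ ?_
      · rw [← hxeq]; exact humax αx hαx
      · rw [← hueq]; exact hxmax αu hαu
    · exact ⟨0, fun x hxS hxmax => absurd ⟨x, hxS, hxmax⟩ hmax⟩
  have hsub : (s '' A \ s '' (Γ0 : Set Γ)) ⊆ ↑(insert u₀ F) := by
    rintro x ⟨hxA, hxΓ0⟩
    obtain ⟨α, hαA, rfl⟩ := hxA
    by_cases hlt : ∃ α' ∈ A, s α < s α'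
    · obtain ⟨α', hα'A, hαα'⟩ := hlt
      have hca := claimA ψ hAC1 hAC2 hAC3 hHC I hI α α' hαα'
      have hmem : α - α' ∈ Γ0 ⊔ Submodule.span ℚ {y : Γ | y ∈ List.ofFn c} :=
        sub_mem (hAM α hαA) (hAM α' hα'A)
      rcases hF (α - α') hmem hca.1 with ⟨γ, ⟨hγ0, hγne⟩, hγeq⟩ | hFmem
      · exfalso
        have hmem2 := mem_s_image ψ hAC1 hAC2 hAC3 I hI Γ0 hψΓ0 γ hγ0 hγne
        rw [hγeq, hca.2] at hmem2
        exact hxΓ0 hmem2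
      · have hsa : s α = ψ (α - α') := by simp only [hs]; exact hca.2.symm
        rw [Finset.coe_insert, hsa]
        exact Set.mem_insert_of_mem _ hFmem
    · push_neg at hlt
      have := hu₀ (s α) ⟨⟨α, hαA, rfl⟩, hxΓ0⟩ hlt
      rw [this, Finset.coe_insert]
      exact Set.mem_insert _ _
  constructor
  · exact ((insert u₀ F).finite_toSet).subset hsub
  · calc (s '' A \ s '' (Γ0 : Set Γ)).ncard
        ≤ (↑(insert u₀ F) : Set Γ).ncard :=
          Set.ncard_le_ncard hsub ((insert u₀ F).finite_toSet)
      _ = (insert u₀ F).card := Set.ncard_coe_finset _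
      _ ≤ F.card + 1 := Finset.card_insert_le _ _
      _ ≤ m + 1 := by omega
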